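/- Let Ψ : ℝ^d → ℝ^M (with M ≥ d) be differentiable at x ∈ ℝ^d and satisfy the coordinate condition Ψ(y)_i = y_i for all i ∈ {1, …, d} and all y, and let W_c ∈ ℝ^{M×M} be the block-diagonal matrix diag(I_d, 0). Then for every v ∈ ℝ^d, the tangent vector η := DΨ(x) v satisfies ηᵀ W_c η = ‖v‖₂². In particular ηᵀ W_c η > 0 whenever v ≠ 0, so the bilinear form (η₁, η₂) ↦ η₁ᵀ W_c η₂ is positive definite on the range of DΨ(x). -/
import Mathlib


open Matrix

theorem coord_deriv {d M : ℕ} (hdM : d ≤ M)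
    (Ψ : (Fin d → ℝ) → (Fin M → ℝ)) (x : Fin d → ℝ)
    (D : (Fin d → ℝ) →L[ℝ] (Fin M → ℝ)) (hD : HasFDerivAt Ψ D x)
    (hcoord : ∀ (y : Fin d → ℝ) (i : Fin d), Ψ y (Fin.castLE hdM i) = y i)
    (v : Fin d → ℝ) (i : Fin d) : D v (Fin.castLE hdM i) = v i := by
  have h1 : HasFDerivAt (fun y : Fin d → ℝ => Ψ y (Fin.castLE hdM i))
      ((ContinuousLinearMap.proj (R := ℝ) (φ := fun _ : Fin M => ℝ)
        (Fin.castLE hdM i)).comp D) x :=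
    ((ContinuousLinearMap.proj (R := ℝ) (φ := fun _ : Fin M => ℝ)
      (Fin.castLE hdM i)).hasFDerivAt (x := Ψ x)).comp x hD
  have h2 : HasFDerivAt (fun y : Fin d → ℝ => y i)
      (ContinuousLinearMap.proj (R := ℝ) (φ := fun _ : Fin d => ℝ) i) x :=
    (ContinuousLinearMap.proj (R := ℝ) (φ := fun _ : Fin d => ℝ) i).hasFDerivAt
  have h1' : HasFDerivAt (fun y : Fin d → ℝ => y i)
      ((ContinuousLinearMap.proj (Fin.castLE hdM i)).comp D) x := by
    simpa only [hcoord] using h1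
  have := h1'.unique h2
  have := congrArg (fun L => L v) this
  simpa using this

/-- for a dictionary whose first `d` entries are the coordinate
functions, the singular weight `W_c = diag(I_d, 0)` is positive definite on
tangent vectors `η = DΨ(x) v`: indeed `ηᵀ W_c η = ‖v‖₂²`. -/
theorem coordinate_weight_riemannian_metric
    {d M : ℕ} (hdM : d ≤ M)
    (Ψ : (Fin d → ℝ) → (Fin M → ℝ)) (x : Fin d → ℝ)
    (D : (Fin d → ℝ) →L[ℝ] (Fin M → ℝ)) (hD : HasFDerivAt Ψ D x)
    (hcoord : ∀ (y : Fin d → ℝ) (i : Fin d), Ψ y (Fin.castLE hdM i) = y i)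
    (Wc : Matrix (Fin M) (Fin M) ℝ)
    (hWc : Wc = Matrix.diagonal fun i : Fin M => if (i : ℕ) < d then (1 : ℝ) else 0) :
    (∀ v : Fin d → ℝ, (D v) ⬝ᵥ Wc.mulVec (D v) = ∑ i, (v i) ^ 2) ∧
      ∀ v : Fin d → ℝ, v ≠ 0 → 0 < (D v) ⬝ᵥ Wc.mulVec (D v) := by
  have key : ∀ v : Fin d → ℝ, (D v) ⬝ᵥ Wc.mulVec (D v) = ∑ i, (v i) ^ 2 := by
    intro v
    subst hWc
    simp only [dotProduct, mulVec_diagonal]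
    have : ∀ j : Fin M, D v j * ((if (j : ℕ) < d then (1:ℝ) else 0) * D v j)
        = if (j : ℕ) < d then D v j ^ 2 else 0 := by
      intro j; split <;> ring
    rw [Finset.sum_congr rfl (fun j _ => this j)]
    rw [← Finset.sum_filter]
    have himg : (Finset.univ.filter (fun j : Fin M => (j : ℕ) < d))
        = Finset.univ.map (Fin.castLEEmb hdM) := by
      ext j
      simp only [Finset.mem_filter, Finset.mem_univ, true_and, Finset.mem_map]
      constructor
      · intro hj
        exact ⟨⟨j, hj⟩, rfl⟩
      · rintro ⟨i, rfl⟩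
        exact i.isLt
    rw [himg, Finset.sum_map]
    refine Finset.sum_congr rfl fun i _ => ?_
    have := coord_deriv hdM Ψ x D hD hcoord v i
    simp [Fin.castLEEmb, this]
  refine ⟨key, fun v hv => ?_⟩
  rw [key v]
  have ⟨i, hi⟩ := Function.ne_iff.mp hv
  exact Finset.sum_pos' (fun j _ => sq_nonneg _) ⟨i, Finset.mem_univ _, pow_two_pos_of_ne_zero hi⟩
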